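/- arXiv:1612.00029 — 4 statements merged into one kernel-verified Lean document; each statement's English description precedes it below -/
import Mathlib

section
/- For any density matrices ρ and σ on a finite-dimensional Hilbert space and any unitary U, the quantum relative entropy satisfies D(UρU†‖σ) ≥ D^↓(ρ‖σ), where D^↓(ρ‖σ) := Σ_m ρ_m log(ρ_m/σ_m) with {ρ_m} and {σ_m} the eigenvalues of ρ and σ, both arranged in non-increasing order. -/
open Matrix
open scoped ComplexOrder

noncomputable section

/-- Functional calculus for a (Hermitian) matrix: apply `f` to the eigenvalues. -/
def matFun {n : ℕ} (f : ℝ → ℝ) (A : Matrix (Fin n) (Fin n) ℂ) : Matrix (Fin n) (Fin n) ℂ :=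
  if hA : A.IsHermitian then
    (hA.eigenvectorUnitary : Matrix (Fin n) (Fin n) ℂ) *
      Matrix.diagonal (fun i => (f (hA.eigenvalues i) : ℂ)) *
      star (hA.eigenvectorUnitary : Matrix (Fin n) (Fin n) ℂ)
  else 0

/-- Matrix logarithm of a Hermitian matrix (spectral calculus with `Real.log`). -/
def matLog {n : ℕ} (A : Matrix (Fin n) (Fin n) ℂ) : Matrix (Fin n) (Fin n) ℂ :=
  matFun Real.log A

/-- Von Neumann entropy `S(ρ) = -Tr(ρ log ρ)`. -/
def vnEntropy {n : ℕ} (ρ : Matrix (Fin n) (Fin n) ℂ) : ℝ :=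
  -(Matrix.trace (ρ * matLog ρ)).re

/-- Quantum relative entropy `D(ρ‖σ) = Tr(ρ log ρ) - Tr(ρ log σ)`. -/
def relEnt {n : ℕ} (ρ σ : Matrix (Fin n) (Fin n) ℂ) : ℝ :=
  (Matrix.trace (ρ * (matLog ρ - matLog σ))).re

/-- Gibbs state `ω_β(H) = e^{-βH}/Tr(e^{-βH})`. -/
def gibbs {n : ℕ} (β : ℝ) (H : Matrix (Fin n) (Fin n) ℂ) : Matrix (Fin n) (Fin n) ℂ :=
  (Matrix.trace (NormedSpace.exp ((-β : ℂ) • H)))⁻¹ • NormedSpace.exp ((-β : ℂ) • H)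

/-- A density matrix: positive semidefinite with unit trace. -/
def IsDensity {n : ℕ} (ρ : Matrix (Fin n) (Fin n) ℂ) : Prop :=
  ρ.PosSemidef ∧ Matrix.trace ρ = 1

/-- Rearrangement of a finite real tuple in non-increasing order. -/
def sortDesc {n : ℕ} (f : Fin n → ℝ) : Fin n → ℝ :=
  fun i => -(((fun j => -f j) ∘ Tuple.sort (fun j => -f j)) i)

/-- `D^↓(ρ‖σ) = Σ_m ρ_m log(ρ_m/σ_m)` with the eigenvalues of both states sorted in
non-increasing order. -/
def Ddown {n : ℕ} (ρeig σeig : Fin n → ℝ) : ℝ :=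
  ∑ i, sortDesc ρeig i * Real.log (sortDesc ρeig i / sortDesc σeig i)

/-! ### Auxiliary lemmas on `sortDesc` -/

section SortAux
open Finset

lemma sortDesc_eq_comp {n : ℕ} (f : Fin n → ℝ) :
    sortDesc f = f ∘ Tuple.sort (fun j => -f j) := by
  funext i; simp [sortDesc]

lemma antitone_sortDesc {n : ℕ} (f : Fin n → ℝ) : Antitone (sortDesc f) := by
  intro i j hij
  have h := Tuple.monotone_sort (fun j => -f j) hij
  simp only [Function.comp_apply] at h
  simp only [sortDesc, Function.comp_apply]
  linarith

lemma sortDesc_unique {n : ℕ} {f g : Fin n → ℝ} (π : Equiv.Perm (Fin n))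
    (hg : g = f ∘ π) (hga : Antitone g) : sortDesc f = g := by
  have h1 : Monotone ((fun j => -f j) ∘ (Tuple.sort (fun j => -f j))) :=
    Tuple.monotone_sort _
  have h2 : Monotone ((fun j => -f j) ∘ π) := by
    intro i j hij
    simp only [Function.comp_apply]
    have : g j ≤ g i := hga hij
    rw [hg] at this
    simp only [Function.comp_apply] at this
    linarith
  have := Tuple.unique_monotone h1 h2
  funext i
  have := congrFun this i
  simp only [Function.comp_apply] at this
  simp only [sortDesc, Function.comp_apply, hg]
  linarith

lemma sum_comp_sortDesc {n : ℕ} (g : ℝ → ℝ) (f : Fin n → ℝ) :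
    ∑ i, g (sortDesc f i) = ∑ i, g (f i) := by
  rw [sortDesc_eq_comp]
  exact Equiv.sum_comp (Tuple.sort (fun j => -f j)) (fun i => g (f i))

lemma sortDesc_pos {n : ℕ} {f : Fin n → ℝ} (hf : ∀ i, 0 < f i) (i : Fin n) :
    0 < sortDesc f i := by
  rw [sortDesc_eq_comp]; exact hf _

lemma sortDesc_nonneg {n : ℕ} {f : Fin n → ℝ} (hf : ∀ i, 0 ≤ f i) (i : Fin n) :
    0 ≤ sortDesc f i := by
  rw [sortDesc_eq_comp]; exact hf _

lemma sortDesc_log {n : ℕ} {f : Fin n → ℝ} (hf : ∀ i, 0 < f i) :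
    sortDesc (fun i => Real.log (f i)) = fun i => Real.log (sortDesc f i) := by
  apply sortDesc_unique (Tuple.sort (fun j => -f j))
  · funext i
    simp only [Function.comp_apply]
    rw [sortDesc_eq_comp]; rfl
  · intro i j hij
    exact Real.log_le_log (sortDesc_pos hf j) (antitone_sortDesc f hij)

/-! ### Rearrangement inequality for doubly stochastic matrices -/

lemma monovary_of_antitone {n : ℕ} (a b : Fin n → ℝ) (ha : Antitone a) (hb : Antitone b) :
    Monovary a b := by
  intro i j hij
  by_contra h
  push_neg at h
  have : j ≤ i := le_of_not_gt (fun hlt => absurd (hb hlt.le) (not_le.2 hij))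
  exact absurd (ha this) (not_le.2 h)

lemma sum_mul_perm_le {n : ℕ} (a b : Fin n → ℝ) (π : Equiv.Perm (Fin n)) :
    ∑ i, a i * b (π i) ≤ ∑ i, sortDesc a i * sortDesc b i := by
  set α := Tuple.sort (fun j => -a j) with hα
  set β := Tuple.sort (fun j => -b j) with hβ
  have h1 : ∑ i, a i * b (π i) = ∑ k, sortDesc a k * b (π (α k)) := by
    rw [← Equiv.sum_comp α (fun i => a i * b (π i))]
    simp [sortDesc_eq_comp]
    rfl
  have h2 : ∀ k, b (π (α k)) = sortDesc b (β.symm (π (α k))) := by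
    intro k
    rw [sortDesc_eq_comp]
    simp
    exact congrArg b (Equiv.apply_symm_apply β _).symm
  have hmono := monovary_of_antitone (sortDesc a) (sortDesc b)
    (antitone_sortDesc a) (antitone_sortDesc b)
  calc ∑ i, a i * b (π i) = ∑ k, sortDesc a k * sortDesc b ((α.trans (π.trans β.symm)) k) := by
        rw [h1]; exact Finset.sum_congr rfl fun k _ => by rw [h2]; rfl
    _ ≤ ∑ i, sortDesc a i * sortDesc b i :=
        hmono.sum_mul_comp_perm_le_sum_mul

lemma sum_doublyStochastic_le {n : ℕ} (a b : Fin n → ℝ) (D : Matrix (Fin n) (Fin n) ℝ)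
    (hD : D ∈ doublyStochastic ℝ (Fin n)) :
    ∑ i, ∑ j, a i * b j * D i j ≤ ∑ i, sortDesc a i * sortDesc b i := by
  obtain ⟨w, hw0, hw1, hwD⟩ := exists_eq_sum_perm_of_mem_doublyStochastic hD
  have hDij : ∀ i j, D i j = ∑ π : Equiv.Perm (Fin n), w π * (if π i = j then 1 else 0) := by
    intro i j
    rw [← hwD, Matrix.sum_apply]
    congr 1
    funext π
    simp [Equiv.Perm.permMatrix, PEquiv.toMatrix_apply, Equiv.toPEquiv_apply, Option.mem_def]
  calc ∑ i, ∑ j, a i * b j * D i j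
      = ∑ π : Equiv.Perm (Fin n), w π * ∑ i, a i * b (π i) := by
        simp_rw [hDij, Finset.mul_sum]
        trans ∑ i, ∑ π : Equiv.Perm (Fin n), w π * (a i * b (π i))
        · refine Finset.sum_congr rfl fun i _ => ?_
          rw [Finset.sum_comm]
          refine Finset.sum_congr rfl fun π _ => ?_
          simp [mul_ite, Finset.sum_ite_eq, mul_comm, mul_left_comm]
        · rw [Finset.sum_comm]
    _ ≤ ∑ π : Equiv.Perm (Fin n), w π * ∑ i, sortDesc a i * sortDesc b i := by
        apply Finset.sum_le_sum
        intro π _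
        exact mul_le_mul_of_nonneg_left (sum_mul_perm_le a b π) (hw0 π)
    _ = ∑ i, sortDesc a i * sortDesc b i := by
        rw [← Finset.sum_mul, hw1, one_mul]

/-! ### Trace computations -/

lemma trace_conj_diag {n : ℕ} (W V : Matrix.unitaryGroup (Fin n) ℂ) (a b : Fin n → ℝ) :
    (Matrix.trace (((W : Matrix (Fin n) (Fin n) ℂ) * Matrix.diagonal (fun i => (a i : ℂ)) *
        star (W : Matrix (Fin n) (Fin n) ℂ)) *
      ((V : Matrix (Fin n) (Fin n) ℂ) * Matrix.diagonal (fun i => (b i : ℂ)) *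
        star (V : Matrix (Fin n) (Fin n) ℂ)))).re
    = ∑ i, ∑ j, a i * b j *
        Complex.normSq ((star (W : Matrix (Fin n) (Fin n) ℂ) * (V : Matrix (Fin n) (Fin n) ℂ)) i j) := by
  set M : Matrix (Fin n) (Fin n) ℂ := star (W : Matrix (Fin n) (Fin n) ℂ) * (V : Matrix (Fin n) (Fin n) ℂ) with hM
  have key : Matrix.trace (((W : Matrix (Fin n) (Fin n) ℂ) * Matrix.diagonal (fun i => (a i : ℂ)) *
        star (W : Matrix (Fin n) (Fin n) ℂ)) *
      ((V : Matrix (Fin n) (Fin n) ℂ) * Matrix.diagonal (fun i => (b i : ℂ)) *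
        star (V : Matrix (Fin n) (Fin n) ℂ)))
      = Matrix.trace (Matrix.diagonal (fun i => (a i : ℂ)) * M * Matrix.diagonal (fun i => (b i : ℂ)) * star M) := by
    rw [hM, StarMul.star_mul, star_star]
    simp only [Matrix.mul_assoc]
    rw [trace_mul_comm]
    simp only [Matrix.mul_assoc]
  rw [key]
  have key2 : Matrix.trace (Matrix.diagonal (fun i => (a i : ℂ)) * M *
      Matrix.diagonal (fun i => (b i : ℂ)) * star M)
      = ((∑ i, ∑ j, a i * b j * Complex.normSq (M i j) : ℝ) : ℂ) := by
    push_cast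
    rw [Matrix.trace]
    refine Finset.sum_congr rfl fun i _ => ?_
    rw [Matrix.diag_apply, Matrix.mul_apply]
    refine Finset.sum_congr rfl fun j _ => ?_
    rw [Matrix.mul_diagonal, Matrix.diagonal_mul, Matrix.star_apply, Complex.star_def]
    have h : (a i : ℂ) * M i j * (b j : ℂ) * (starRingEnd ℂ) (M i j)
        = ((a i : ℂ) * (b j : ℂ)) * (M i j * (starRingEnd ℂ) (M i j)) := by ring
    rw [h, Complex.mul_conj]
  rw [key2, Complex.ofReal_re]

lemma trace_conj_diag_self {n : ℕ} (V : Matrix.unitaryGroup (Fin n) ℂ) (a b : Fin n → ℝ) :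
    (Matrix.trace (((V : Matrix (Fin n) (Fin n) ℂ) * Matrix.diagonal (fun i => (a i : ℂ)) *
        star (V : Matrix (Fin n) (Fin n) ℂ)) *
      ((V : Matrix (Fin n) (Fin n) ℂ) * Matrix.diagonal (fun i => (b i : ℂ)) *
        star (V : Matrix (Fin n) (Fin n) ℂ)))).re
    = ∑ i, a i * b i := by
  rw [trace_conj_diag V V a b]
  have h1 : star (V : Matrix (Fin n) (Fin n) ℂ) * (V : Matrix (Fin n) (Fin n) ℂ) = 1 :=
    mem_unitaryGroup_iff'.mp V.2
  rw [h1]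
  refine Finset.sum_congr rfl fun i _ => ?_
  rw [Finset.sum_eq_single i]
  · simp [Matrix.one_apply]
  · intro j _ hji
    simp [Matrix.one_apply, Ne.symm hji]
  · simp

lemma unitary_normSq_doublyStochastic {n : ℕ} (M : Matrix (Fin n) (Fin n) ℂ)
    (hM : M ∈ Matrix.unitaryGroup (Fin n) ℂ) :
    Matrix.of (fun i j => (Complex.normSq (M i j) : ℝ)) ∈ doublyStochastic ℝ (Fin n) := by
  have hM1 : M * star M = 1 := mem_unitaryGroup_iff.mp hM
  have hM2 : star M * M = 1 := mem_unitaryGroup_iff'.mp hM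
  rw [mem_doublyStochastic_iff_sum]
  refine ⟨fun i j => Complex.normSq_nonneg _, ?_, ?_⟩
  · intro i
    have h : ((∑ j, Complex.normSq (M i j) : ℝ) : ℂ) = 1 := by
      push_cast
      have h1 : (M * star M) i i = 1 := by rw [hM1]; simp [Matrix.one_apply]
      rw [Matrix.mul_apply] at h1
      rw [← h1]
      exact Finset.sum_congr rfl fun j _ => by
        rw [Matrix.star_apply, Complex.star_def, Complex.mul_conj]
    exact_mod_cast h
  · intro j
    have h : ((∑ i, Complex.normSq (M i j) : ℝ) : ℂ) = 1 := by
      push_cast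
      have h1 : (star M * M) j j = 1 := by rw [hM2]; simp [Matrix.one_apply]
      rw [Matrix.mul_apply] at h1
      rw [← h1]
      exact Finset.sum_congr rfl fun i _ => by
        rw [Matrix.star_apply, Complex.star_def, mul_comm, Complex.mul_conj]
    exact_mod_cast h

/-! ### Eigenvalues under unitary conjugation -/

open Polynomial in
lemma charpoly_unitary_conj {n : ℕ} (U : Matrix.unitaryGroup (Fin n) ℂ) (A : Matrix (Fin n) (Fin n) ℂ) :
    ((U : Matrix (Fin n) (Fin n) ℂ) * A * star (U : Matrix (Fin n) (Fin n) ℂ)).charpoly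
      = A.charpoly := by
  have hU1 : (U : Matrix (Fin n) (Fin n) ℂ) * star (U : Matrix (Fin n) (Fin n) ℂ) = 1 :=
    mem_unitaryGroup_iff.mp U.2
  set Um := (C : ℂ →+* ℂ[X]).mapMatrix (U : Matrix (Fin n) (Fin n) ℂ) with hUm
  set Usm := (C : ℂ →+* ℂ[X]).mapMatrix (star (U : Matrix (Fin n) (Fin n) ℂ)) with hUsm
  have hmul1 : Um * Usm = 1 := by
    rw [hUm, hUsm, ← _root_.map_mul, hU1, _root_.map_one]
  have hchar : charmatrix ((U : Matrix (Fin n) (Fin n) ℂ) * A * star (U : Matrix (Fin n) (Fin n) ℂ))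
      = Um * charmatrix A * Usm := by
    rw [charmatrix, charmatrix]
    rw [Matrix.mul_sub, Matrix.sub_mul]
    congr 1
    · have hc : Commute (Matrix.scalar (Fin n) (X : ℂ[X])) Um :=
        Matrix.scalar_commute _ (fun r' => Commute.all _ _) _
      rw [← hc.eq, Matrix.mul_assoc, hmul1, Matrix.mul_one]
    · rw [hUm, hUsm, ← _root_.map_mul, ← _root_.map_mul]
  rw [Matrix.charpoly, Matrix.charpoly, hchar, Matrix.det_mul, Matrix.det_mul]
  rw [mul_comm (Um.det), mul_assoc, ← Matrix.det_mul, hmul1, Matrix.det_one, mul_one]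

open Polynomial in
lemma eigenvalues_multiset_conj {n : ℕ} {A B : Matrix (Fin n) (Fin n) ℂ}
    (hA : A.IsHermitian) (hB : B.IsHermitian) (U : Matrix.unitaryGroup (Fin n) ℂ)
    (hAB : B = (U : Matrix (Fin n) (Fin n) ℂ) * A * star (U : Matrix (Fin n) (Fin n) ℂ))
    (g : ℝ → ℝ) : ∑ i, g (hB.eigenvalues i) = ∑ i, g (hA.eigenvalues i) := by
  have key : ∀ (Z : Matrix (Fin n) (Fin n) ℂ) (hZ : Z.IsHermitian),
      Z.charpoly.roots = (Finset.univ : Finset (Fin n)).val.map (fun i => ((hZ.eigenvalues i : ℝ) : ℂ)) := by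
    intro Z hZ
    have hspec := hZ.spectral_theorem
    have h1 : Z.charpoly = (Matrix.diagonal ((fun r : ℝ => (r:ℂ)) ∘ hZ.eigenvalues)).charpoly := by
      conv_lhs => rw [hspec]
      exact charpoly_unitary_conj hZ.eigenvectorUnitary
        (Matrix.diagonal ((fun r : ℝ => (r:ℂ)) ∘ hZ.eigenvalues))
    rw [h1]
    have h2 : (Matrix.diagonal ((fun r : ℝ => (r:ℂ)) ∘ hZ.eigenvalues)).charpoly
        = ∏ i : Fin n, (X - C ((hZ.eigenvalues i : ℝ) : ℂ)) := by
      rw [Matrix.charpoly_of_upperTriangular _ (Matrix.blockTriangular_diagonal _)]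
      simp
    rw [h2]
    have h3 : ∏ i : Fin n, (X - C ((hZ.eigenvalues i : ℝ) : ℂ))
        = (((Finset.univ : Finset (Fin n)).val.map (fun i => ((hZ.eigenvalues i : ℝ) : ℂ))).map (fun a => X - C a)).prod := by
      rw [Multiset.map_map]
      rfl
    rw [h3, Polynomial.roots_multiset_prod_X_sub_C]
  have hroots : (Finset.univ : Finset (Fin n)).val.map (fun i => ((hB.eigenvalues i : ℝ) : ℂ))
      = (Finset.univ : Finset (Fin n)).val.map (fun i => ((hA.eigenvalues i : ℝ) : ℂ)) := by
    rw [← key A hA, ← key B hB, hAB, charpoly_unitary_conj]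
  have := congrArg (fun m : Multiset ℂ => (m.map (fun z => g z.re)).sum) hroots
  simpa [Multiset.map_map, Finset.sum, Function.comp_def] using this

lemma spectral' {n : ℕ} {A : Matrix (Fin n) (Fin n) ℂ} (hA : A.IsHermitian) :
    A = (hA.eigenvectorUnitary : Matrix (Fin n) (Fin n) ℂ) *
      Matrix.diagonal (fun i => (hA.eigenvalues i : ℂ)) *
      star (hA.eigenvectorUnitary : Matrix (Fin n) (Fin n) ℂ) := by
  conv_lhs => rw [hA.spectral_theorem]
  rfl

end SortAux

/-- for density matrices `ρ, σ` (with `σ` positive definite) and any unitary `U`,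
`D(UρU†‖σ) ≥ D^↓(ρ‖σ)`. -/
theorem relEnt_unitary_ge_Ddown {n : ℕ} (ρ σ : Matrix (Fin n) (Fin n) ℂ)
    (hρ : IsDensity ρ) (hσ : IsDensity σ) (hσpd : σ.PosDef)
    (U : Matrix.unitaryGroup (Fin n) ℂ) :
    relEnt ((U : Matrix (Fin n) (Fin n) ℂ) * ρ * star (U : Matrix (Fin n) (Fin n) ℂ)) σ ≥
      Ddown hρ.1.1.eigenvalues hσ.1.1.eigenvalues := by
  classical
  have hρH : ρ.IsHermitian := hρ.1.1
  have hσH : σ.IsHermitian := hσ.1.1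
  set p : Fin n → ℝ := hρ.1.1.eigenvalues with hp
  set q : Fin n → ℝ := hσ.1.1.eigenvalues with hq
  have hpnn : ∀ i, 0 ≤ p i := fun i => hρ.1.eigenvalues_nonneg i
  have hqpos : ∀ i, 0 < q i := fun i => hσpd.eigenvalues_pos i
  set ρ' : Matrix (Fin n) (Fin n) ℂ :=
    (U : Matrix (Fin n) (Fin n) ℂ) * ρ * star (U : Matrix (Fin n) (Fin n) ℂ) with hρ'def
  have hρ'psd : ρ'.PosSemidef := by
    have := hρ.1.mul_mul_conjTranspose_same (U : Matrix (Fin n) (Fin n) ℂ)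
    simpa [hρ'def, Matrix.star_eq_conjTranspose] using this
  have hρ'H : ρ'.IsHermitian := hρ'psd.1
  set μ : Fin n → ℝ := hρ'H.eigenvalues with hμ
  -- split the relative entropy
  have hsplit : relEnt ρ' σ
      = (Matrix.trace (ρ' * matLog ρ')).re - (Matrix.trace (ρ' * matLog σ)).re := by
    rw [relEnt, Matrix.mul_sub, Matrix.trace_sub, Complex.sub_re]
  -- Term 1
  have hlogρ' : matLog ρ' = (hρ'H.eigenvectorUnitary : Matrix (Fin n) (Fin n) ℂ) *
      Matrix.diagonal (fun i => ((Real.log (μ i) : ℝ) : ℂ)) *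
      star (hρ'H.eigenvectorUnitary : Matrix (Fin n) (Fin n) ℂ) := by
    rw [matLog, matFun, dif_pos hρ'H]
  have hprod1 : ρ' * matLog ρ'
      = ((hρ'H.eigenvectorUnitary : Matrix (Fin n) (Fin n) ℂ) *
        Matrix.diagonal (fun i => (μ i : ℂ)) *
        star (hρ'H.eigenvectorUnitary : Matrix (Fin n) (Fin n) ℂ)) *
        ((hρ'H.eigenvectorUnitary : Matrix (Fin n) (Fin n) ℂ) *
        Matrix.diagonal (fun i => ((Real.log (μ i) : ℝ) : ℂ)) *
        star (hρ'H.eigenvectorUnitary : Matrix (Fin n) (Fin n) ℂ)) := by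
    rw [hlogρ']
    congr 1
    exact spectral' hρ'H
  have hT1 : (Matrix.trace (ρ' * matLog ρ')).re = ∑ i, μ i * Real.log (μ i) := by
    rw [hprod1]
    exact trace_conj_diag_self hρ'H.eigenvectorUnitary μ (fun i => Real.log (μ i))
  have hT1' : ∑ i, μ i * Real.log (μ i) = ∑ i, p i * Real.log (p i) := by
    have := eigenvalues_multiset_conj hρH hρ'H U hρ'def (fun x => x * Real.log x)
    simpa using this
  -- Term 2
  set W₀ : Matrix.unitaryGroup (Fin n) ℂ := U * hρH.eigenvectorUnitary with hW₀
  have hW₀coe : (W₀ : Matrix (Fin n) (Fin n) ℂ)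
      = (U : Matrix (Fin n) (Fin n) ℂ) * (hρH.eigenvectorUnitary : Matrix (Fin n) (Fin n) ℂ) := rfl
  have e2 : ρ' = (W₀ : Matrix (Fin n) (Fin n) ℂ) * Matrix.diagonal (fun i => (p i : ℂ)) *
      star (W₀ : Matrix (Fin n) (Fin n) ℂ) := by
    rw [hρ'def, hW₀coe, StarMul.star_mul]
    conv_lhs => rw [spectral' hρH]
    simp only [Matrix.mul_assoc]
    rfl
  have hlogσ : matLog σ = (hσH.eigenvectorUnitary : Matrix (Fin n) (Fin n) ℂ) *
      Matrix.diagonal (fun i => ((Real.log (q i) : ℝ) : ℂ)) *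
      star (hσH.eigenvectorUnitary : Matrix (Fin n) (Fin n) ℂ) := by
    rw [matLog, matFun, dif_pos hσH]
  set M : Matrix (Fin n) (Fin n) ℂ :=
    star (W₀ : Matrix (Fin n) (Fin n) ℂ) * (hσH.eigenvectorUnitary : Matrix (Fin n) (Fin n) ℂ) with hMdef
  have hprod2 : ρ' * matLog σ
      = ((W₀ : Matrix (Fin n) (Fin n) ℂ) * Matrix.diagonal (fun i => (p i : ℂ)) *
        star (W₀ : Matrix (Fin n) (Fin n) ℂ)) *
        ((hσH.eigenvectorUnitary : Matrix (Fin n) (Fin n) ℂ) *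
        Matrix.diagonal (fun i => ((Real.log (q i) : ℝ) : ℂ)) *
        star (hσH.eigenvectorUnitary : Matrix (Fin n) (Fin n) ℂ)) := by
    conv_lhs => rw [e2]
    rw [hlogσ]
  have hT2 : (Matrix.trace (ρ' * matLog σ)).re
      = ∑ i, ∑ j, p i * Real.log (q j) * Complex.normSq (M i j) := by
    rw [hprod2]
    exact trace_conj_diag W₀ hσH.eigenvectorUnitary p (fun i => Real.log (q i))
  -- M is unitary
  have hMu : M ∈ Matrix.unitaryGroup (Fin n) ℂ := by
    have h1 : (hσH.eigenvectorUnitary : Matrix (Fin n) (Fin n) ℂ) *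
        star (hσH.eigenvectorUnitary : Matrix (Fin n) (Fin n) ℂ) = 1 :=
      mem_unitaryGroup_iff.mp hσH.eigenvectorUnitary.2
    have h2 : star (W₀ : Matrix (Fin n) (Fin n) ℂ) * (W₀ : Matrix (Fin n) (Fin n) ℂ) = 1 :=
      mem_unitaryGroup_iff'.mp W₀.2
    rw [mem_unitaryGroup_iff, hMdef, StarMul.star_mul, star_star]
    calc star (W₀ : Matrix (Fin n) (Fin n) ℂ) * (hσH.eigenvectorUnitary : Matrix (Fin n) (Fin n) ℂ) *
          (star (hσH.eigenvectorUnitary : Matrix (Fin n) (Fin n) ℂ) * (W₀ : Matrix (Fin n) (Fin n) ℂ))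
        = star (W₀ : Matrix (Fin n) (Fin n) ℂ) *
          (((hσH.eigenvectorUnitary : Matrix (Fin n) (Fin n) ℂ) *
            star (hσH.eigenvectorUnitary : Matrix (Fin n) (Fin n) ℂ)) * (W₀ : Matrix (Fin n) (Fin n) ℂ)) := by
          simp only [Matrix.mul_assoc]
      _ = 1 := by rw [h1, Matrix.one_mul, h2]
  -- rearrangement bound
  have hineq : ∑ i, ∑ j, p i * Real.log (q j) * Complex.normSq (M i j)
      ≤ ∑ i, sortDesc p i * sortDesc (fun j => Real.log (q j)) i := by
    have := sum_doublyStochastic_le p (fun j => Real.log (q j))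
      (Matrix.of (fun i j => (Complex.normSq (M i j) : ℝ)))
      (unitary_normSq_doublyStochastic M hMu)
    simpa using this
  have hlogsort : sortDesc (fun j => Real.log (q j)) = fun i => Real.log (sortDesc q i) :=
    sortDesc_log hqpos
  -- rewrite Ddown
  have hDdown : Ddown p q
      = (∑ i, sortDesc p i * Real.log (sortDesc p i))
        - ∑ i, sortDesc p i * Real.log (sortDesc q i) := by
    rw [Ddown, ← Finset.sum_sub_distrib]
    refine Finset.sum_congr rfl fun i _ => ?_
    rcases eq_or_lt_of_le (sortDesc_nonneg hpnn i) with h0 | hpos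
    · rw [← h0]; ring
    · rw [Real.log_div (ne_of_gt hpos) (ne_of_gt (sortDesc_pos hqpos i))]
      ring
  have hplogp : ∑ i, sortDesc p i * Real.log (sortDesc p i) = ∑ i, p i * Real.log (p i) := by
    have := sum_comp_sortDesc (fun x => x * Real.log x) p
    simpa using this
  -- conclude
  have h2 : ∑ i, sortDesc p i * sortDesc (fun j => Real.log (q j)) i
      = ∑ i, sortDesc p i * Real.log (sortDesc q i) := by
    refine Finset.sum_congr rfl fun i _ => ?_
    rw [hlogsort]
  show relEnt ρ' σ ≥ Ddown p q
  rw [hsplit, hT1, hT1', hDdown, hplogp, hT2]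
  linarith [hineq, h2]
end
end

section
/- Let H ≥ 0 be a Hermitian operator on a finite-dimensional Hilbert space with at least two distinct eigenvalues and with nondegenerate ground eigenvalue E₀ = 0 (i.e., g(E₀) = 1). Fix inverse temperatures β_c > β_h > 0. Then the ratio of von Neumann entropies S(ω_{β_c}(JH))/S(ω_{β_h}(JH)) tends to 0 as J → +∞. -/
open Matrix
open scoped ComplexOrder

noncomputable section

open Filter Topology

/-! ### Auxiliary spectral lemmas -/

namespace EntropyRatioAux

open Polynomial

variable {n : ℕ}

lemma charpoly_conj (U A : Matrix (Fin n) (Fin n) ℂ) (hU : U * star U = 1) :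
    (U * A * star U).charpoly = A.charpoly := by
  have hone : (U * star U).map (C : ℂ →+* ℂ[X]) = 1 := by
    rw [hU]; exact Matrix.map_one _ (map_zero C) (map_one C)
  have hm : charmatrix (U * A * star U) =
      (U.map C) * charmatrix A * ((star U).map C) := by
    simp only [charmatrix, Matrix.map_mul, mul_sub, sub_mul]
    congr 1
    · rw [mul_assoc, (Matrix.scalar_commute (X : ℂ[X]) (Commute.all X) ((star U).map C)),
        ← mul_assoc, ← Matrix.map_mul, hone, one_mul]
    · simp [RingHom.mapMatrix_apply, Matrix.map_mul]
  rw [Matrix.charpoly, hm, Matrix.det_mul, Matrix.det_mul, Matrix.charpoly]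
  have hdet : (U.map (C : ℂ →+* ℂ[X])).det * ((star U).map (C : ℂ →+* ℂ[X])).det = 1 := by
    rw [← Matrix.det_mul, ← Matrix.map_mul, hone, Matrix.det_one]
  calc (U.map (C : ℂ →+* ℂ[X])).det * (charmatrix A).det * ((star U).map (C : ℂ →+* ℂ[X])).det
      = (U.map (C : ℂ →+* ℂ[X])).det * ((star U).map (C : ℂ →+* ℂ[X])).det
          * (charmatrix A).det := by ring
    _ = (charmatrix A).det := by rw [hdet, one_mul]

lemma charpoly_diagonal (v : Fin n → ℂ) :
    (Matrix.diagonal v).charpoly = ∏ i, (X - C (v i)) := by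
  rw [Matrix.charpoly]
  have : charmatrix (Matrix.diagonal v) = Matrix.diagonal fun i => (X : ℂ[X]) - C (v i) := by
    ext i j
    by_cases h : i = j
    · subst h; simp [charmatrix_apply_eq]
    · simp [charmatrix_apply_ne _ _ _ h, Matrix.diagonal_apply_ne _ h]
  rw [this, Matrix.det_diagonal]

lemma multiset_eq_of_prod_eq (v w : Fin n → ℝ)
    (h : (∏ i, (X - C ((v i : ℂ)))) = ∏ i, (X - C ((w i : ℂ)))) :
    Finset.univ.val.map v = Finset.univ.val.map w := by
  have h2 : (Finset.univ.val.map (fun i => ((v i : ℂ)))) =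
      (Finset.univ.val.map (fun i => ((w i : ℂ)))) := by
    have e1 := Polynomial.roots_multiset_prod_X_sub_C
      (Finset.univ.val.map (fun i => ((v i : ℂ))))
    have e2 := Polynomial.roots_multiset_prod_X_sub_C
      (Finset.univ.val.map (fun i => ((w i : ℂ))))
    rw [← e1, ← e2]
    congr 1
    rw [Multiset.map_map, Multiset.map_map]
    simpa [Finset.prod_eq_multiset_prod] using congrArg id h
  have := congrArg (Multiset.map Complex.re) h2
  simpa [Multiset.map_map, Function.comp_def] using this

lemma sum_comp_of_multiset_eq (v w : Fin n → ℝ) (g : ℝ → ℝ)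
    (h : Finset.univ.val.map v = Finset.univ.val.map w) :
    ∑ i, g (v i) = ∑ i, g (w i) := by
  have : (Finset.univ.val.map (g ∘ v)).sum = (Finset.univ.val.map (g ∘ w)).sum := by
    rw [← Multiset.map_map, ← Multiset.map_map, h]
  simpa [Finset.sum] using this

lemma trace_mul_matFun (A : Matrix (Fin n) (Fin n) ℂ) (hA : A.IsHermitian) (f : ℝ → ℝ) :
    Matrix.trace (A * matFun f A) = ∑ i, ((hA.eigenvalues i * f (hA.eigenvalues i) : ℝ) : ℂ) := by
  rw [matFun, dif_pos hA]
  rw [← Matrix.mul_assoc, ← Matrix.mul_assoc, Matrix.trace_mul_cycle,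
    ← Matrix.mul_assoc, (by simpa using hA.conjStarAlgAut_star_eigenvectorUnitary :
      star (hA.eigenvectorUnitary : Matrix (Fin n) (Fin n) ℂ) * A * (hA.eigenvectorUnitary : Matrix (Fin n) (Fin n) ℂ) =
        diagonal (RCLike.ofReal ∘ hA.eigenvalues))]
  rw [Matrix.diagonal_mul_diagonal, Matrix.trace_diagonal]
  push_cast
  simp [mul_comm]

/-- The eigenvalues of `U D U*` are a rearrangement of the diagonal of `D`:
sums of a function over them agree. -/
lemma sum_eig_conj_diag (U : Matrix.unitaryGroup (Fin n) ℂ) (v : Fin n → ℝ) (g : ℝ → ℝ)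
    (hρ : (((U : Matrix (Fin n) (Fin n) ℂ) *
        Matrix.diagonal (fun i => ((v i : ℝ) : ℂ)) *
        star (U : Matrix (Fin n) (Fin n) ℂ)).IsHermitian)) :
    ∑ i, g (hρ.eigenvalues i) = ∑ i, g (v i) := by
  set ρ : Matrix (Fin n) (Fin n) ℂ :=
    (U : Matrix (Fin n) (Fin n) ℂ) * Matrix.diagonal (fun i => ((v i : ℝ) : ℂ)) *
      star (U : Matrix (Fin n) (Fin n) ℂ) with hρdef
  have hU : (U : Matrix (Fin n) (Fin n) ℂ) * star (U : Matrix (Fin n) (Fin n) ℂ) = 1 :=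
    Matrix.mem_unitaryGroup_iff.mp U.2
  have hV : ((hρ.eigenvectorUnitary : Matrix (Fin n) (Fin n) ℂ)) *
      star ((hρ.eigenvectorUnitary : Matrix (Fin n) (Fin n) ℂ)) = 1 :=
    Matrix.mem_unitaryGroup_iff.mp hρ.eigenvectorUnitary.2
  have hspec : ρ = (hρ.eigenvectorUnitary : Matrix (Fin n) (Fin n) ℂ) *
      Matrix.diagonal (fun i => ((hρ.eigenvalues i : ℝ) : ℂ)) *
      star (hρ.eigenvectorUnitary : Matrix (Fin n) (Fin n) ℂ) := by
    convert hρ.spectral_theorem using 2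
    simp only [Unitary.conjStarAlgAut_apply]; rfl
  have h1 : ρ.charpoly = ∏ i, (X - C ((v i : ℂ))) := by
    rw [hρdef, charpoly_conj _ _ hU, charpoly_diagonal]
  have h2 : ρ.charpoly = ∏ i, (X - C ((hρ.eigenvalues i : ℂ))) := by
    conv_lhs => rw [hspec]
    rw [charpoly_conj _ _ hV, charpoly_diagonal]
  exact sum_comp_of_multiset_eq _ _ g (multiset_eq_of_prod_eq _ _ (h2.symm.trans h1))

lemma vnEntropy_conj_diag (U : Matrix.unitaryGroup (Fin n) ℂ) (v : Fin n → ℝ) :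
    vnEntropy ((U : Matrix (Fin n) (Fin n) ℂ) * Matrix.diagonal (fun i => ((v i : ℝ) : ℂ)) *
        star (U : Matrix (Fin n) (Fin n) ℂ))
      = -∑ i, v i * Real.log (v i) := by
  set ρ : Matrix (Fin n) (Fin n) ℂ :=
    (U : Matrix (Fin n) (Fin n) ℂ) * Matrix.diagonal (fun i => ((v i : ℝ) : ℂ)) *
      star (U : Matrix (Fin n) (Fin n) ℂ) with hρdef
  have hdiagH : (Matrix.diagonal (fun i => ((v i : ℝ) : ℂ))).IsHermitian :=
    Matrix.isHermitian_diagonal_of_self_adjoint _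
      (funext fun i => by simp [Pi.star_apply, Complex.star_def, Complex.conj_ofReal])
  have hρ : ρ.IsHermitian := by
    rw [hρdef, Matrix.star_eq_conjTranspose]
    exact Matrix.isHermitian_mul_mul_conjTranspose _ hdiagH
  rw [vnEntropy, matLog, trace_mul_matFun ρ hρ Real.log]
  have : (∑ i, ((hρ.eigenvalues i * Real.log (hρ.eigenvalues i) : ℝ) : ℂ)).re
      = ∑ i, hρ.eigenvalues i * Real.log (hρ.eigenvalues i) := by
    norm_cast
  rw [this, sum_eig_conj_diag U v (fun x => x * Real.log x) hρ]

lemma gibbs_smul_eq (H : Matrix (Fin n) (Fin n) ℂ) (hH1 : H.IsHermitian) (β J : ℝ) :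
    gibbs β ((J : ℂ) • H) =
      (hH1.eigenvectorUnitary : Matrix (Fin n) (Fin n) ℂ) *
        Matrix.diagonal (fun i =>
          ((Real.exp (-(β * J) * hH1.eigenvalues i) /
            (∑ j, Real.exp (-(β * J) * hH1.eigenvalues j)) : ℝ) : ℂ)) *
        star (hH1.eigenvectorUnitary : Matrix (Fin n) (Fin n) ℂ) := by
  set U : Matrix (Fin n) (Fin n) ℂ := (hH1.eigenvectorUnitary : Matrix (Fin n) (Fin n) ℂ)
    with hUdef
  have hU : U * star U = 1 := Matrix.mem_unitaryGroup_iff.mp hH1.eigenvectorUnitary.2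
  have hsU : star U * U = 1 := Matrix.mem_unitaryGroup_iff'.mp hH1.eigenvectorUnitary.2
  have hinv : U⁻¹ = star U := Matrix.inv_eq_left_inv hsU
  have hUnit : IsUnit U := ⟨⟨U, star U, hU, hsU⟩, rfl⟩
  have hv1 : ((-β : ℂ) * (J : ℂ)) • (RCLike.ofReal ∘ hH1.eigenvalues : Fin n → ℂ)
      = fun i => ((-(β * J) * hH1.eigenvalues i : ℝ) : ℂ) := by
    funext i
    have hco : ∀ y : ℝ, (RCLike.ofReal y : ℂ) = (y : ℂ) := fun y => by norm_cast
    simp only [Pi.smul_apply, Function.comp_apply, smul_eq_mul, hco]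
    push_cast
    ring
  have hsm : (-β : ℂ) • ((J : ℂ) • H) =
      U * Matrix.diagonal (fun i => ((-(β * J) * hH1.eigenvalues i : ℝ) : ℂ)) * star U := by
    conv_lhs => rw [hH1.spectral_theorem]
    rw [Unitary.conjStarAlgAut_apply, smul_smul, ← smul_mul_assoc, ← mul_smul_comm, ← Matrix.diagonal_smul, hv1]
  have hexpv : NormedSpace.exp (fun i => ((-(β * J) * hH1.eigenvalues i : ℝ) : ℂ))
      = fun i => ((Real.exp (-(β * J) * hH1.eigenvalues i) : ℝ) : ℂ) := by
    rw [Pi.exp_def]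
    funext i
    rw [← Complex.exp_eq_exp_ℂ, ← Complex.ofReal_exp]
  have hexp : NormedSpace.exp ((-β : ℂ) • ((J : ℂ) • H)) =
      U * Matrix.diagonal (fun i => ((Real.exp (-(β * J) * hH1.eigenvalues i) : ℝ) : ℂ))
        * star U := by
    rw [hsm, ← hinv, Matrix.exp_conj U _ hUnit, Matrix.exp_diagonal, hexpv, hinv]
  have htr : Matrix.trace (NormedSpace.exp ((-β : ℂ) • ((J : ℂ) • H)))
      = ((∑ j, Real.exp (-(β * J) * hH1.eigenvalues j) : ℝ) : ℂ) := by
    rw [hexp, Matrix.trace_mul_cycle, hsU, Matrix.one_mul, Matrix.trace_diagonal]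
    push_cast
    rfl
  have hvec : (((∑ j, Real.exp (-(β * J) * hH1.eigenvalues j) : ℝ) : ℂ))⁻¹
        • (fun i => ((Real.exp (-(β * J) * hH1.eigenvalues i) : ℝ) : ℂ))
      = fun i => ((Real.exp (-(β * J) * hH1.eigenvalues i) /
          (∑ j, Real.exp (-(β * J) * hH1.eigenvalues j)) : ℝ) : ℂ) := by
    funext i
    simp only [Pi.smul_apply, smul_eq_mul]
    rw [← Complex.ofReal_inv, ← Complex.ofReal_mul, div_eq_inv_mul]
  rw [gibbs, htr, hexp, ← smul_mul_assoc, ← mul_smul_comm, ← Matrix.diagonal_smul, hvec]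

lemma vnEntropy_gibbs (H : Matrix (Fin n) (Fin n) ℂ) (hH1 : H.IsHermitian) (β J : ℝ) :
    vnEntropy (gibbs β ((J : ℂ) • H)) =
      -∑ i, (Real.exp (-(β * J) * hH1.eigenvalues i) /
          (∑ j, Real.exp (-(β * J) * hH1.eigenvalues j))) *
        Real.log (Real.exp (-(β * J) * hH1.eigenvalues i) /
          (∑ j, Real.exp (-(β * J) * hH1.eigenvalues j))) := by
  rw [gibbs_smul_eq H hH1 β J, vnEntropy_conj_diag hH1.eigenvectorUnitary
    (fun i => Real.exp (-(β * J) * hH1.eigenvalues i) /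
      (∑ j, Real.exp (-(β * J) * hH1.eigenvalues j)))]

end EntropyRatioAux

namespace PartB

variable {n : ℕ}

/-- partition function -/
def Zf (lam : Fin n → ℝ) (β J : ℝ) : ℝ := ∑ j, Real.exp (-(β * J) * lam j)

/-- entropy -/
def Sf (lam : Fin n → ℝ) (β J : ℝ) : ℝ :=
  -∑ i, (Real.exp (-(β * J) * lam i) / Zf lam β J) *
      Real.log (Real.exp (-(β * J) * lam i) / Zf lam β J)

variable {lam : Fin n → ℝ} {i0 : Fin n}

lemma Zf_pos (lam : Fin n → ℝ) (β J : ℝ) (i : Fin n) : 0 < Zf lam β J :=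
  Finset.sum_pos (fun j _ => Real.exp_pos _) ⟨i, Finset.mem_univ i⟩

lemma one_le_Zf (h0 : lam i0 = 0) (β J : ℝ) : 1 ≤ Zf lam β J := by
  have := Finset.single_le_sum (f := fun j => Real.exp (-(β * J) * lam j))
    (fun j _ => (Real.exp_pos _).le) (Finset.mem_univ i0)
  simp only [h0, mul_zero, Real.exp_zero] at this
  exact this

lemma Zf_le (hnn : ∀ i, 0 ≤ lam i) {β J : ℝ} (hβ : 0 < β) (hJ : 0 ≤ J) :
    Zf lam β J ≤ n := by
  calc Zf lam β J ≤ ∑ _j : Fin n, (1 : ℝ) := by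
        refine Finset.sum_le_sum fun j _ => ?_
        rw [Real.exp_le_one_iff]
        have : 0 ≤ (β * J) * lam j := mul_nonneg (mul_nonneg hβ.le hJ) (hnn j)
        linarith
    _ = n := by simp

lemma term_eq (h0 : lam i0 = 0) (β J : ℝ) (i : Fin n) :
    -((Real.exp (-(β * J) * lam i) / Zf lam β J) *
        Real.log (Real.exp (-(β * J) * lam i) / Zf lam β J))
      = (Real.exp (-(β * J) * lam i) / Zf lam β J) *
          ((β * J) * lam i + Real.log (Zf lam β J)) := by
  rw [Real.log_div (Real.exp_ne_zero _) (Zf_pos lam β J i0).ne', Real.log_exp]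
  ring

lemma Sf_eq (h0 : lam i0 = 0) (β J : ℝ) :
    Sf lam β J = ∑ i, (Real.exp (-(β * J) * lam i) / Zf lam β J) *
        ((β * J) * lam i + Real.log (Zf lam β J)) := by
  rw [Sf, ← Finset.sum_neg_distrib]
  exact Finset.sum_congr rfl fun i _ => term_eq h0 β J i

lemma term_nonneg (hnn : ∀ i, 0 ≤ lam i) (h0 : lam i0 = 0) {β J : ℝ} (hβ : 0 < β)
    (hJ : 0 ≤ J) (i : Fin n) :
    0 ≤ (Real.exp (-(β * J) * lam i) / Zf lam β J) *
        ((β * J) * lam i + Real.log (Zf lam β J)) := by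
  have h1 : 0 ≤ Real.exp (-(β * J) * lam i) / Zf lam β J :=
    div_nonneg (Real.exp_pos _).le (Zf_pos lam β J i0).le
  have h2 : 0 ≤ Real.log (Zf lam β J) := Real.log_nonneg (one_le_Zf h0 β J)
  have h3 : 0 ≤ (β * J) * lam i := mul_nonneg (mul_nonneg hβ.le hJ) (hnn i)
  positivity

lemma Sf_nonneg (hnn : ∀ i, 0 ≤ lam i) (h0 : lam i0 = 0) {β J : ℝ} (hβ : 0 < β)
    (hJ : 0 ≤ J) : 0 ≤ Sf lam β J := by
  rw [Sf_eq h0]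
  exact Finset.sum_nonneg fun i _ => term_nonneg hnn h0 hβ hJ i

end PartB

namespace PartB2
open PartB

variable {n : ℕ} {lam : Fin n → ℝ} {i0 i1 : Fin n}

/-- upper bound on the entropy -/
lemma Sf_le_bound (hnn : ∀ i, 0 ≤ lam i) (h0 : lam i0 = 0)
    (hmin : ∀ i, i ≠ i0 → lam i1 ≤ lam i)
    {β J : ℝ} (hβ : 0 < β) (hJ : 0 ≤ J) :
    Sf lam β J ≤ n * (Real.exp (-(β * J) * lam i1) *
      ((β * J) * (∑ i, lam i) + n)) := by
  set Z := Zf lam β J with hZ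
  set e : ℝ := Real.exp (-(β * J) * lam i1) with he
  set M : ℝ := ∑ i, lam i with hM
  have hZpos : 0 < Z := Zf_pos lam β J i0
  have hZ1 : 1 ≤ Z := one_le_Zf h0 β J
  have hZn : Z ≤ n := Zf_le hnn hβ hJ
  have hlogZ0 : 0 ≤ Real.log Z := Real.log_nonneg hZ1
  have hMlam : ∀ i, lam i ≤ M := fun i =>
    Finset.single_le_sum (f := lam) (fun j _ => hnn j) (Finset.mem_univ i)
  have hM0 : 0 ≤ M := Finset.sum_nonneg fun i _ => hnn i
  have hEmono : ∀ i, i ≠ i0 → Real.exp (-(β * J) * lam i) ≤ e := by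
    intro i hi
    rw [he, Real.exp_le_exp]
    have := hmin i hi
    nlinarith [mul_nonneg hβ.le hJ]
  -- log Z ≤ n * e
  have hlogZ : Real.log Z ≤ n * e := by
    have h1 : Real.log Z ≤ Z - 1 := Real.log_le_sub_one_of_pos hZpos
    have h2 : Z - 1 ≤ ∑ i ∈ Finset.univ.erase i0, Real.exp (-(β * J) * lam i) := by
      have hsum : (∑ i ∈ Finset.univ.erase i0, Real.exp (-(β * J) * lam i))
          + Real.exp (-(β * J) * lam i0) = Z := Finset.sum_erase_add _ _ (Finset.mem_univ i0)
      rw [h0, mul_zero, Real.exp_zero] at hsum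
      linarith
    have h3 : (∑ i ∈ Finset.univ.erase i0, Real.exp (-(β * J) * lam i))
        ≤ (Finset.univ.erase i0).card • e := by
      exact Finset.sum_le_card_nsmul _ _ e fun i hi =>
        hEmono i (Finset.ne_of_mem_erase hi)
    have h4 : ((Finset.univ.erase i0).card : ℝ) ≤ n := by
      exact_mod_cast (Finset.card_erase_le (a := i0)
        (s := (Finset.univ : Finset (Fin n)))).trans (le_of_eq (by simp))
    have h5 : (Finset.univ.erase i0).card • e ≤ n * e := by
      rw [nsmul_eq_mul]
      exact mul_le_mul_of_nonneg_right h4 (Real.exp_pos _).le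
    linarith
  rw [Sf_eq h0]
  have hterm : ∀ i ∈ Finset.univ, (Real.exp (-(β * J) * lam i) / Z) *
      ((β * J) * lam i + Real.log Z) ≤ e * ((β * J) * M + n) := by
    intro i _
    by_cases hii : i = i0
    · subst hii
      rw [h0]
      simp only [mul_zero, zero_add, Real.exp_zero]
      have hp1 : 1 / Z ≤ 1 := by rw [div_le_one hZpos]; exact hZ1
      calc 1 / Z * Real.log Z ≤ 1 * Real.log Z := mul_le_mul_of_nonneg_right hp1 hlogZ0
        _ = Real.log Z := one_mul _
        _ ≤ n * e := hlogZ
        _ ≤ e * ((β * J) * M + n) := by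
            rw [mul_comm (n : ℝ) e]
            refine mul_le_mul_of_nonneg_left ?_ (Real.exp_pos _).le
            nlinarith [mul_nonneg (mul_nonneg hβ.le hJ) hM0]
    · have hile : Real.exp (-(β * J) * lam i) / Z ≤ e :=
        (div_le_self (Real.exp_pos _).le hZ1).trans (hEmono i hii)
      have hlogZn : Real.log Z ≤ n := (Real.log_le_sub_one_of_pos hZpos).trans (by linarith)
      have hsum2 : (β * J) * lam i + Real.log Z ≤ (β * J) * M + n :=
        add_le_add (mul_le_mul_of_nonneg_left (hMlam i) (mul_nonneg hβ.le hJ)) hlogZn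
      have h1 : 0 ≤ (β * J) * lam i + Real.log Z :=
        add_nonneg (mul_nonneg (mul_nonneg hβ.le hJ) (hnn i)) hlogZ0
      exact mul_le_mul hile hsum2 h1 (Real.exp_pos _).le
  calc (∑ i, (Real.exp (-(β * J) * lam i) / Z) * ((β * J) * lam i + Real.log Z))
      ≤ (Finset.univ : Finset (Fin n)).card • (e * ((β * J) * M + n)) :=
        Finset.sum_le_card_nsmul _ _ _ hterm
    _ = n * (e * ((β * J) * M + n)) := by
        rw [nsmul_eq_mul]
        simp

end PartB2

namespace PartB3
open PartB

variable {n : ℕ} {lam : Fin n → ℝ} {i0 i1 : Fin n}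

/-- lower bound on the entropy -/
lemma bound_le_Sf (hnn : ∀ i, 0 ≤ lam i) (h0 : lam i0 = 0)
    {β J : ℝ} (hβ : 0 < β) (hJ : 0 ≤ J) :
    (Real.exp (-(β * J) * lam i1) / n) * ((β * J) * lam i1) ≤ Sf lam β J := by
  set Z := Zf lam β J with hZ
  have hZpos : 0 < Z := Zf_pos lam β J i0
  have hZ1 : 1 ≤ Z := one_le_Zf h0 β J
  have hZn : Z ≤ n := Zf_le hnn hβ hJ
  have hlogZ0 : 0 ≤ Real.log Z := Real.log_nonneg hZ1
  rw [Sf_eq h0]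
  have hsingle : (Real.exp (-(β * J) * lam i1) / Z) * ((β * J) * lam i1 + Real.log Z)
      ≤ ∑ i, (Real.exp (-(β * J) * lam i) / Z) * ((β * J) * lam i + Real.log Z) :=
    Finset.single_le_sum (fun i _ => term_nonneg hnn h0 hβ hJ i) (Finset.mem_univ i1)
  refine le_trans ?_ hsingle
  have h1 : Real.exp (-(β * J) * lam i1) / n ≤ Real.exp (-(β * J) * lam i1) / Z :=
    div_le_div_of_nonneg_left (Real.exp_pos _).le hZpos hZn
  have h2 : (β * J) * lam i1 ≤ (β * J) * lam i1 + Real.log Z := by linarith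
  have h3 : 0 ≤ (β * J) * lam i1 := mul_nonneg (mul_nonneg hβ.le hJ) (hnn i1)
  have h4 : 0 ≤ Real.exp (-(β * J) * lam i1) / n :=
    div_nonneg (Real.exp_pos _).le (Nat.cast_nonneg n)
  exact mul_le_mul h1 h2 h3 (div_nonneg (Real.exp_pos _).le hZpos.le)

end PartB3

namespace PartB4
open PartB PartB2 PartB3

lemma ratio_tendsto {n : ℕ} (lam : Fin n → ℝ) (hnn : ∀ i, 0 ≤ lam i)
    (i0 : Fin n) (h0 : lam i0 = 0) (i1 : Fin n) (h1 : 0 < lam i1)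
    (hmin : ∀ i, i ≠ i0 → lam i1 ≤ lam i)
    (βc βh : ℝ) (hβh : 0 < βh) (hβ : βh < βc) :
    Tendsto (fun J : ℝ => Sf lam βc J / Sf lam βh J) atTop (𝓝 0) := by
  have hβc : 0 < βc := hβh.trans hβ
  set Δ : ℝ := lam i1 with hΔ
  set M : ℝ := ∑ i, lam i with hM
  have hn : (0 : ℝ) < n := by
    have := i0.pos
    exact_mod_cast this
  have hM0 : 0 ≤ M := Finset.sum_nonneg fun i _ => hnn i
  set g : ℝ → ℝ := fun J => ((n : ℝ) * (Real.exp (-(βc * J) * Δ) * ((βc * J) * M + n))) /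
    ((Real.exp (-(βh * J) * Δ) / n) * ((βh * J) * Δ)) with hg
  set h : ℝ → ℝ := fun J => ((n : ℝ) ^ 2 * (βc * M + n / J) / (βh * Δ)) *
    Real.exp (-((βc - βh) * Δ) * J) with hh
  have hgh : ∀ J : ℝ, 0 < J → g J = h J := by
    intro J hJ
    rw [hg, hh]
    simp only
    rw [show -(βc * J) * Δ = (-((βc - βh) * Δ) * J) + (-(βh * J) * Δ) by ring, Real.exp_add]
    field_simp
  have hc : 0 < (βc - βh) * Δ := by nlinarith
  have l3 : Tendsto (fun J : ℝ => Real.exp (-((βc - βh) * Δ) * J)) atTop (𝓝 0) := by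
    have t1 : Tendsto (fun J : ℝ => -((βc - βh) * Δ) * J) atTop atBot :=
      (tendsto_const_mul_atBot_of_neg (neg_lt_zero.mpr hc)).mpr tendsto_id
    exact Real.tendsto_exp_atBot.comp t1
  have l1 : Tendsto (fun J : ℝ => (n : ℝ) / J) atTop (𝓝 0) :=
    tendsto_const_nhds.div_atTop tendsto_id
  have l2 : Tendsto (fun J : ℝ => (n : ℝ) ^ 2 * (βc * M + n / J) / (βh * Δ)) atTop
      (𝓝 ((n : ℝ) ^ 2 * (βc * M + 0) / (βh * Δ))) :=
    (tendsto_const_nhds.mul (tendsto_const_nhds.add l1)).div_const _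
  have htend_h : Tendsto h atTop (𝓝 0) := by
    simpa only [mul_zero] using l2.mul l3
  have hlow : ∀ᶠ J : ℝ in atTop, 0 ≤ Sf lam βc J / Sf lam βh J := by
    filter_upwards [eventually_ge_atTop (0 : ℝ)] with J hJ
    exact div_nonneg (Sf_nonneg hnn h0 hβc hJ) (Sf_nonneg hnn h0 hβh hJ)
  have hup : ∀ᶠ J : ℝ in atTop, Sf lam βc J / Sf lam βh J ≤ h J := by
    filter_upwards [eventually_gt_atTop (0 : ℝ)] with J hJ
    have hBpos : 0 < (Real.exp (-(βh * J) * Δ) / n) * ((βh * J) * Δ) := by positivity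
    have hdd : Sf lam βc J / Sf lam βh J ≤ g J := by
      refine div_le_div₀ (by positivity) ?_ hBpos ?_
      · exact Sf_le_bound hnn h0 hmin hβc hJ.le
      · exact bound_le_Sf hnn h0 hβh hJ.le
    exact hdd.trans_eq (hgh J hJ)
  exact tendsto_of_tendsto_of_tendsto_of_le_of_le' tendsto_const_nhds htend_h hlow hup

end PartB4



/-- for `H ≥ 0` with at least two distinct eigenvalues and a nondegenerate
ground eigenvalue `E₀ = 0`, and inverse temperatures `β_c > β_h > 0`,
`S(ω_{β_c}(JH))/S(ω_{β_h}(JH)) → 0` as `J → +∞`. -/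
theorem entropy_ratio_tendsto_zero {n : ℕ} (H : Matrix (Fin n) (Fin n) ℂ)
    (hH : H.PosSemidef)
    (htwo : ∃ i j : Fin n, hH.1.eigenvalues i ≠ hH.1.eigenvalues j)
    (hzero : ∃ i, hH.1.eigenvalues i = 0)
    (hnondeg : Fintype.card {i : Fin n // hH.1.eigenvalues i = 0} = 1)
    (βc βh : ℝ) (hβh : 0 < βh) (hβ : βh < βc) :
    Tendsto (fun J : ℝ =>
        vnEntropy (gibbs βc ((J : ℂ) • H)) / vnEntropy (gibbs βh ((J : ℂ) • H)))
      atTop (𝓝 0) := by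
  set lam : Fin n → ℝ := hH.1.eigenvalues with hlam
  have hnn : ∀ i, 0 ≤ lam i := fun i => hH.eigenvalues_nonneg i
  obtain ⟨i0, h0⟩ := hzero
  have huniq : ∀ i, lam i = 0 → i = i0 := by
    intro i hi
    obtain ⟨a, ha⟩ := Fintype.card_eq_one_iff.mp hnondeg
    have h1 := ha ⟨i, hi⟩
    have h2 := ha ⟨i0, h0⟩
    have := h1.trans h2.symm
    exact congrArg Subtype.val this
  -- pick the smallest nonzero eigenvalue
  have hsne : (Finset.univ.filter (fun i => lam i ≠ 0)).Nonempty := by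
    obtain ⟨i, j, hij⟩ := htwo
    by_cases hi : lam i = 0
    · refine ⟨j, Finset.mem_filter.mpr ⟨Finset.mem_univ _, ?_⟩⟩
      intro hj
      exact hij (hi.trans hj.symm)
    · exact ⟨i, Finset.mem_filter.mpr ⟨Finset.mem_univ _, hi⟩⟩
  obtain ⟨i1, hi1mem, hi1min⟩ := Finset.exists_min_image _ lam hsne
  have h1 : 0 < lam i1 :=
    lt_of_le_of_ne (hnn i1) (Ne.symm (Finset.mem_filter.mp hi1mem).2)
  have hmin : ∀ i, i ≠ i0 → lam i1 ≤ lam i := by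
    intro i hi
    refine hi1min i (Finset.mem_filter.mpr ⟨Finset.mem_univ _, ?_⟩)
    intro hzero'
    exact hi (huniq i hzero')
  have hmain := PartB4.ratio_tendsto lam hnn i0 h0 i1 h1 hmin βc βh hβh hβ
  refine hmain.congr fun J => ?_
  rw [EntropyRatioAux.vnEntropy_gibbs H hH.1 βc J, EntropyRatioAux.vnEntropy_gibbs H hH.1 βh J]
  simp only [PartB.Sf, PartB.Zf]
  rfl
end
end

section
/- Let β > 0, and for a Hamiltonian H ≥ 0 with lowest eigenvalue 0 and second-lowest eigenvalue E₁ > 0, denote the thermal energy at scaled coupling J by E(β, J) = Tr(ω_β(JH) H). Then for β_c > β_h > 0 there is a constant K > 0, independent of J, such that (β_c E(β_c, J))/(β_h E(β_h, J)) ≤ K · Z_{β_h}(J) · e^{−JE₁(β_c − β_h)} for all J > 0, and in particular this ratio tends to 0 as J → ∞. -/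
open Matrix
open scoped ComplexOrder

noncomputable section

open Filter Topology

/-- Exponential of a real multiple of a Hermitian matrix, diagonalized. -/
lemma exp_smul_herm {n : ℕ} (H : Matrix (Fin n) (Fin n) ℂ) (hH : H.IsHermitian) (c : ℝ) :
    NormedSpace.exp ((c : ℂ) • H) =
      (hH.eigenvectorUnitary : Matrix (Fin n) (Fin n) ℂ) *
        Matrix.diagonal (fun i => Complex.exp ((c : ℂ) * hH.eigenvalues i)) *
        star (hH.eigenvectorUnitary : Matrix (Fin n) (Fin n) ℂ) := by
  set U := hH.eigenvectorUnitary with hU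
  have h1 : (c : ℂ) • H =
      ((Unitary.toUnits U : (Matrix (Fin n) (Fin n) ℂ)ˣ) : Matrix (Fin n) (Fin n) ℂ) *
        Matrix.diagonal (fun i => (c : ℂ) * hH.eigenvalues i) *
        (((Unitary.toUnits U)⁻¹ : (Matrix (Fin n) (Fin n) ℂ)ˣ) : Matrix (Fin n) (Fin n) ℂ) := by
    conv_lhs => rw [hH.spectral_theorem, Unitary.conjStarAlgAut_apply]
    rw [← Matrix.smul_mul, ← Matrix.mul_smul, ← Matrix.diagonal_smul]
    have hd : (c : ℂ) • (RCLike.ofReal ∘ hH.eigenvalues : Fin n → ℂ) =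
        fun i => (c : ℂ) * hH.eigenvalues i := by
      funext i; simp [smul_eq_mul]
    rw [hd]
    rfl
  rw [h1, Matrix.exp_units_conj, Matrix.exp_diagonal]
  have hd2 : (NormedSpace.exp (fun i => (c : ℂ) * hH.eigenvalues i) : Fin n → ℂ) =
      fun i => Complex.exp ((c : ℂ) * hH.eigenvalues i) := by
    funext i
    rw [Pi.coe_exp]
    exact (congrFun Complex.exp_eq_exp_ℂ _).symm
  rw [hd2]
  rfl

lemma trace_exp_smul {n : ℕ} (H : Matrix (Fin n) (Fin n) ℂ) (hH : H.IsHermitian) (c : ℝ) :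
    Matrix.trace (NormedSpace.exp ((c : ℂ) • H)) =
      ((∑ i, Real.exp (c * hH.eigenvalues i) : ℝ) : ℂ) := by
  rw [exp_smul_herm H hH c, Matrix.trace_mul_cycle,
    (show star (hH.eigenvectorUnitary : Matrix (Fin n) (Fin n) ℂ) *
      (hH.eigenvectorUnitary : Matrix (Fin n) (Fin n) ℂ) = 1 from hH.eigenvectorUnitary.2.1),
    one_mul, Matrix.trace_diagonal]
  push_cast [Complex.ofReal_exp]
  rfl

lemma trace_exp_smul_mul {n : ℕ} (H : Matrix (Fin n) (Fin n) ℂ) (hH : H.IsHermitian) (c : ℝ) :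
    Matrix.trace (NormedSpace.exp ((c : ℂ) • H) * H) =
      ((∑ i, Real.exp (c * hH.eigenvalues i) * hH.eigenvalues i : ℝ) : ℂ) := by
  rw [exp_smul_herm H hH c]
  set U := (hH.eigenvectorUnitary : Matrix (Fin n) (Fin n) ℂ) with hUdef
  set ev := hH.eigenvalues with hevdef
  have hstar : star U * U = 1 := hH.eigenvectorUnitary.2.1
  have hspec : H = U * Matrix.diagonal (RCLike.ofReal ∘ ev) * star U := by
    have := hH.spectral_theorem; rwa [Unitary.conjStarAlgAut_apply] at this
  rw [hspec]
  have hmul : ∀ (D E : Matrix (Fin n) (Fin n) ℂ),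
      U * D * star U * (U * E * star U) = U * (D * E) * star U := by
    intro D E
    calc U * D * star U * (U * E * star U)
        = U * D * (star U * U) * (E * star U) := by
          simp only [Matrix.mul_assoc]
      _ = U * (D * E) * star U := by
          rw [hstar, Matrix.mul_one]
          simp only [Matrix.mul_assoc]
  rw [hmul, Matrix.diagonal_mul_diagonal, Matrix.trace_mul_cycle, hstar, one_mul,
    Matrix.trace_diagonal]
  push_cast [Complex.ofReal_exp]
  rfl

/-- with `E(β, J) = Tr(ω_β(JH) H)` the thermal energy, lowest eigenvalue `0` and
spectral gap `E₁ > 0`, for `β_c > β_h > 0` there is `K > 0` independent of `J` with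
`(β_c E(β_c,J))/(β_h E(β_h,J)) ≤ K Z_{β_h}(J) e^{−J E₁ (β_c − β_h)}` for all `J > 0`, and the
ratio tends to `0` as `J → ∞`. -/
theorem thermal_energy_ratio_bound {n : ℕ} (H : Matrix (Fin n) (Fin n) ℂ)
    (hH : H.PosSemidef) (hzero : ∃ i, hH.1.eigenvalues i = 0)
    (E₁ : ℝ) (hE₁ : 0 < E₁) (hE₁eig : ∃ i, hH.1.eigenvalues i = E₁)
    (hgap : ∀ i, hH.1.eigenvalues i = 0 ∨ E₁ ≤ hH.1.eigenvalues i)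
    (βc βh : ℝ) (hβh : 0 < βh) (hβ : βh < βc) :
    (∃ K : ℝ, 0 < K ∧ ∀ J : ℝ, 0 < J →
        βc * (Matrix.trace (gibbs βc ((J : ℂ) • H) * H)).re /
            (βh * (Matrix.trace (gibbs βh ((J : ℂ) • H) * H)).re) ≤
          K * (Matrix.trace (NormedSpace.exp ((-(βh * J) : ℂ) • H))).re *
            Real.exp (-J * E₁ * (βc - βh))) ∧
    Tendsto (fun J : ℝ =>
        βc * (Matrix.trace (gibbs βc ((J : ℂ) • H) * H)).re /
          (βh * (Matrix.trace (gibbs βh ((J : ℂ) • H) * H)).re))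
      atTop (𝓝 0) := by
  have hherm := hH.1
  have hβc : (0 : ℝ) < βc := hβh.trans hβ
  obtain ⟨μ, hμ⟩ : ∃ μ : Fin n → ℝ, μ = hherm.eigenvalues := ⟨_, rfl⟩
  rw [← hμ] at hzero hE₁eig hgap
  have hμnn : ∀ i, 0 ≤ μ i := by rw [hμ]; exact fun i => hH.eigenvalues_nonneg i
  set Z : ℝ → ℝ → ℝ := fun β J => ∑ i, Real.exp (-(β * J) * μ i) with hZ
  set S : ℝ → ℝ → ℝ := fun β J => ∑ i, Real.exp (-(β * J) * μ i) * μ i with hS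
  have hZone : ∀ β J : ℝ, 0 < β → 0 < J → 1 ≤ Z β J := by
    intro β J hβ0 hJ
    obtain ⟨i0, hi0⟩ := hzero
    have h1 : Real.exp (-(β * J) * μ i0) = 1 := by rw [hi0]; simp
    have h2 : Real.exp (-(β * J) * μ i0) ≤ ∑ i, Real.exp (-(β * J) * μ i) :=
      Finset.single_le_sum (f := fun i => Real.exp (-(β * J) * μ i))
        (fun i _ => (Real.exp_pos _).le) (Finset.mem_univ i0)
    rw [hZ]; dsimp only; linarith
  have hSpos : ∀ β J : ℝ, 0 < S β J := by
    intro β J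
    obtain ⟨i1, hi1⟩ := hE₁eig
    have h1 : 0 < Real.exp (-(β * J) * μ i1) * μ i1 := by
      rw [hi1]; exact mul_pos (Real.exp_pos _) hE₁
    have h2 : Real.exp (-(β * J) * μ i1) * μ i1 ≤ ∑ i, Real.exp (-(β * J) * μ i) * μ i :=
      Finset.single_le_sum (f := fun i => Real.exp (-(β * J) * μ i) * μ i)
        (fun i _ => mul_nonneg (Real.exp_pos _).le (hμnn i)) (Finset.mem_univ i1)
    rw [hS]; dsimp only; linarith
  have key : ∀ β J : ℝ,
      (Matrix.trace (gibbs β ((J : ℂ) • H) * H)).re = S β J / Z β J := by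
    intro β J
    have hsmul : ((-β : ℂ)) • ((J : ℂ) • H) = ((-(β * J) : ℝ) : ℂ) • H := by
      rw [smul_smul]; push_cast; ring_nf
    have hZc : Matrix.trace (NormedSpace.exp ((-β : ℂ) • ((J : ℂ) • H))) = ((Z β J : ℝ) : ℂ) := by
      rw [hsmul, trace_exp_smul H hherm, ← hμ]
    have hSc : Matrix.trace (NormedSpace.exp ((-β : ℂ) • ((J : ℂ) • H)) * H)
        = ((S β J : ℝ) : ℂ) := by
      rw [hsmul, trace_exp_smul_mul H hherm, ← hμ]
    rw [gibbs, Matrix.smul_mul, Matrix.trace_smul, hZc, hSc, smul_eq_mul, ← Complex.ofReal_inv,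
      ← Complex.ofReal_mul, Complex.ofReal_re, inv_mul_eq_div]
  have keyZ : ∀ β J : ℝ,
      (Matrix.trace (NormedSpace.exp ((-(β * J) : ℂ) • H))).re = Z β J := by
    intro β J
    have h : ((-(β * J) : ℂ)) • H = ((-(β * J) : ℝ) : ℂ) • H := by push_cast; ring_nf
    rw [h, trace_exp_smul H hherm, ← hμ, Complex.ofReal_re]
  have hmain : ∀ J : ℝ, 0 < J →
      βc * (S βc J / Z βc J) / (βh * (S βh J / Z βh J)) ≤
        (βc / βh) * Z βh J * Real.exp (-J * E₁ * (βc - βh)) := by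
    intro J hJ
    have hZc1 : 1 ≤ Z βc J := hZone βc J hβc hJ
    have hZh1 : 1 ≤ Z βh J := hZone βh J hβh hJ
    have hSc := hSpos βc J
    have hSh := hSpos βh J
    have hZcpos : 0 < Z βc J := lt_of_lt_of_le one_pos hZc1
    have hZhpos : 0 < Z βh J := lt_of_lt_of_le one_pos hZh1
    set Ex := Real.exp (-J * E₁ * (βc - βh)) with hEx
    have hExpos : 0 < Ex := Real.exp_pos _
    have hSle : S βc J ≤ Ex * S βh J := by
      rw [hS, Finset.mul_sum]
      apply Finset.sum_le_sum
      intro i _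
      rcases hgap i with h0 | h1
      · rw [h0]; simp
      · rw [hEx, ← mul_assoc, ← Real.exp_add]
        apply mul_le_mul_of_nonneg_right _ (hμnn i)
        apply Real.exp_le_exp.mpr
        have hkey : J * (βc - βh) * E₁ ≤ J * (βc - βh) * μ i :=
          mul_le_mul_of_nonneg_left h1 (mul_nonneg hJ.le (sub_nonneg.mpr hβ.le))
        nlinarith [hkey]
    have heq1 : βc * (S βc J / Z βc J) / (βh * (S βh J / Z βh J)) =
        βc * S βc J * Z βh J / (βh * S βh J * Z βc J) := by
      field_simp
    rw [heq1, div_le_iff₀ (mul_pos (mul_pos hβh hSh) hZcpos)]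
    have h2 : βc * S βc J * Z βh J ≤ βc * (Ex * S βh J) * Z βh J :=
      mul_le_mul_of_nonneg_right (mul_le_mul_of_nonneg_left hSle hβc.le) hZhpos.le
    have h3 : βc * (Ex * S βh J) * Z βh J ≤ βc * (Ex * S βh J) * Z βh J * Z βc J :=
      le_mul_of_one_le_right (mul_nonneg (mul_nonneg hβc.le (mul_nonneg hExpos.le hSh.le)) hZhpos.le) hZc1
    have h4 : (βc / βh) * Z βh J * Ex * (βh * S βh J * Z βc J) =
        βc * (Ex * S βh J) * Z βh J * Z βc J := by
      field_simp
    linarith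
  refine ⟨⟨βc / βh, div_pos hβc hβh, fun J hJ => ?_⟩, ?_⟩
  · rw [key βc J, key βh J, keyZ βh J]
    exact hmain J hJ
  · have hZn : ∀ J : ℝ, 0 < J → Z βh J ≤ n := by
      intro J hJ
      rw [hZ]; dsimp only
      calc (∑ i, Real.exp (-(βh * J) * μ i)) ≤ ∑ _i : Fin n, (1 : ℝ) := by
            apply Finset.sum_le_sum
            intro i _
            rw [Real.exp_le_one_iff]
            apply mul_nonpos_of_nonpos_of_nonneg _ (hμnn i)
            simp [le_of_lt (mul_pos hβh hJ)]
        _ = n := by simp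
    have hupper : ∀ J : ℝ, 0 < J →
        βc * (S βc J / Z βc J) / (βh * (S βh J / Z βh J)) ≤
          (βc / βh) * n * Real.exp (-J * E₁ * (βc - βh)) := by
      intro J hJ
      refine (hmain J hJ).trans ?_
      apply mul_le_mul_of_nonneg_right _ (Real.exp_pos _).le
      exact mul_le_mul_of_nonneg_left (hZn J hJ) (div_pos hβc hβh).le
    have hlower : ∀ J : ℝ, 0 < J →
        0 ≤ βc * (S βc J / Z βc J) / (βh * (S βh J / Z βh J)) := by
      intro J hJ
      have hZcpos : 0 < Z βc J := lt_of_lt_of_le one_pos (hZone βc J hβc hJ)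
      have hZhpos : 0 < Z βh J := lt_of_lt_of_le one_pos (hZone βh J hβh hJ)
      have hSc := (hSpos βc J).le
      have hSh := hSpos βh J
      exact div_nonneg (mul_nonneg hβc.le (div_nonneg hSc hZcpos.le))
        (mul_nonneg hβh.le (div_nonneg hSh.le hZhpos.le))
    have htend : Tendsto (fun J : ℝ => (βc / βh) * n * Real.exp (-J * E₁ * (βc - βh)))
        atTop (𝓝 0) := by
      have h0 : Tendsto (fun J : ℝ => J * (E₁ * (βc - βh))) atTop atTop :=
        Tendsto.atTop_mul_const (mul_pos hE₁ (sub_pos.mpr hβ)) tendsto_id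
      have h1 : Tendsto (fun J : ℝ => -(J * (E₁ * (βc - βh)))) atTop atBot :=
        tendsto_neg_atTop_atBot.comp h0
      have h1' : Tendsto (fun J : ℝ => -J * E₁ * (βc - βh)) atTop atBot :=
        h1.congr (fun J => by ring)
      have h2 : Tendsto (fun J : ℝ => Real.exp (-J * E₁ * (βc - βh))) atTop (𝓝 0) :=
        Real.tendsto_exp_atBot.comp h1'
      have h3 := h2.const_mul ((βc / βh) * n)
      simpa using h3
    have heq : ∀ J : ℝ, βc * (Matrix.trace (gibbs βc ((J : ℂ) • H) * H)).re /
          (βh * (Matrix.trace (gibbs βh ((J : ℂ) • H) * H)).re) =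
        βc * (S βc J / Z βc J) / (βh * (S βh J / Z βh J)) := by
      intro J
      rw [key βc J, key βh J]
    apply squeeze_zero' ?_ ?_ htend
    · filter_upwards [eventually_gt_atTop (0 : ℝ)] with J hJ
      rw [heq J]; exact hlower J hJ
    · filter_upwards [eventually_gt_atTop (0 : ℝ)] with J hJ
      rw [heq J]; exact hupper J hJ
end
end

section
/- Consider the classical 1D Ising Hamiltonian on N spins with periodic boundary conditions, H_N(σ) = −h Σ_j σ_j − J Σ_j σ_j σ_{j+1}, with σ_j ∈ {−1, +1}, in the antiferromagnetic regime J < 0 with h = 2|J|. Then the number of ground state configurations (configurations minimizing H_N) is at least 2^{⌊N/2⌋}. -/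
noncomputable section

/-- The spin value (±1) of a Boolean spin. -/
def spin (b : Bool) : ℝ := if b then 1 else -1

/-- Classical 1D Ising energy with periodic boundary conditions:
`H_N(σ) = −h Σ_j σ_j − J Σ_j σ_j σ_{j+1}` (indices mod `N`). -/
def isingE (N : ℕ) [NeZero N] (J h : ℝ) (σ : Fin N → Bool) : ℝ :=
  -h * ∑ j : Fin N, spin (σ j) - J * ∑ j : Fin N, spin (σ j) * spin (σ (j + 1))

lemma energy_eq (N : ℕ) [NeZero N] (J : ℝ) (hJ : J < 0) (τ : Fin N → Bool) :
    isingE N J (2 * |J|) τ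
      = ∑ j : Fin N, J * (spin (τ j) + spin (τ (j + 1)) - spin (τ j) * spin (τ (j + 1))) := by
  have habs : |J| = -J := abs_of_neg hJ
  have hshift : ∑ j : Fin N, spin (τ (j + 1)) = ∑ j : Fin N, spin (τ j) :=
    Fintype.sum_equiv (Equiv.addRight 1) _ _ (fun j => rfl)
  have expand : ∑ j : Fin N, J * (spin (τ j) + spin (τ (j + 1)) - spin (τ j) * spin (τ (j + 1)))
      = J * (∑ j : Fin N, spin (τ j)) + J * (∑ j : Fin N, spin (τ (j + 1)))
        - J * ∑ j : Fin N, spin (τ j) * spin (τ (j + 1)) := by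
    rw [Finset.mul_sum, Finset.mul_sum, Finset.mul_sum, ← Finset.sum_add_distrib,
      ← Finset.sum_sub_distrib]
    exact Finset.sum_congr rfl (fun j _ => by ring)
  rw [isingE, expand, hshift, habs]
  ring

lemma edge_ge (J : ℝ) (hJ : J < 0) (a b : Bool) :
    J ≤ J * (spin a + spin b - spin a * spin b) := by
  cases a <;> cases b <;> simp [spin] <;> linarith

lemma edge_eq (J : ℝ) (a b : Bool) (h : a = true ∨ b = true) :
    J * (spin a + spin b - spin a * spin b) = J := by
  cases a <;> cases b <;> simp_all [spin] <;> ring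

lemma ground_of_indep (N : ℕ) [NeZero N] (J : ℝ) (hJ : J < 0) (σ : Fin N → Bool)
    (hσ : ∀ j : Fin N, σ j = true ∨ σ (j + 1) = true) (τ : Fin N → Bool) :
    isingE N J (2 * |J|) σ ≤ isingE N J (2 * |J|) τ := by
  rw [energy_eq N J hJ σ, energy_eq N J hJ τ]
  calc ∑ j : Fin N, J * (spin (σ j) + spin (σ (j + 1)) - spin (σ j) * spin (σ (j + 1)))
      = ∑ _j : Fin N, J := Finset.sum_congr rfl (fun j _ => edge_eq J _ _ (hσ j))
    _ ≤ _ := Finset.sum_le_sum (fun j _ => edge_ge J hJ _ _)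

/-- Embed a choice of flips at odd positions into a spin configuration. -/
def embed (N : ℕ) [NeZero N] (f : Fin (N / 2) → Bool) (j : Fin N) : Bool :=
  if h : j.val % 2 = 1 ∧ j.val / 2 < N / 2 then f ⟨j.val / 2, h.2⟩ else true

lemma embed_indep (N : ℕ) [NeZero N] (f : Fin (N / 2) → Bool) (j : Fin N) :
    embed N f j = true ∨ embed N f (j + 1) = true := by
  rcases Nat.even_or_odd j.val with ⟨k, hk⟩ | ⟨k, hk⟩
  · left
    rw [embed, dif_neg]
    rintro ⟨h1, -⟩
    omega
  · right
    have hjv : j.val < N := j.isLt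
    have hval : ((j + 1 : Fin N)).val = (j.val + 1) % N := by
      simp [Fin.add_def]
    rw [embed, dif_neg]
    rintro ⟨h1, -⟩
    rw [hval] at h1
    rcases Nat.lt_or_ge (j.val + 1) N with hlt | hge
    · rw [Nat.mod_eq_of_lt hlt] at h1; omega
    · have heq : j.val + 1 = N := by omega
      rw [heq, Nat.mod_self] at h1; omega

lemma embed_inj (N : ℕ) [NeZero N] : Function.Injective (embed N) := by
  intro f g hfg
  funext i
  have hi : 2 * i.val + 1 < N := by have := i.isLt; omega
  have := congrFun hfg ⟨2 * i.val + 1, hi⟩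
  rw [embed, embed] at this
  have hc : (2 * i.val + 1) % 2 = 1 ∧ (2 * i.val + 1) / 2 < N / 2 := by
    constructor
    · omega
    · have := i.isLt; omega
  rw [dif_pos hc, dif_pos hc] at this
  have hfin : (⟨(2 * i.val + 1) / 2, hc.2⟩ : Fin (N / 2)) = i := by
    ext; simp; omega
  rwa [hfin] at this

/-- in the antiferromagnetic regime `J < 0` with `h = 2|J|`, the 1D Ising chain
with periodic boundary conditions has at least `2^⌊N/2⌋` ground state configurations. -/
theorem ising_ground_state_count (N : ℕ) [NeZero N] (J h : ℝ) (hJ : J < 0) (hh : h = 2 * |J|) :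
    2 ^ (N / 2) ≤
      {σ : Fin N → Bool | ∀ τ : Fin N → Bool, isingE N J h σ ≤ isingE N J h τ}.ncard := by
  subst hh
  set S := {σ : Fin N → Bool | ∀ τ : Fin N → Bool,
    isingE N J (2 * |J|) σ ≤ isingE N J (2 * |J|) τ} with hS
  have hsub : Set.range (embed N) ⊆ S := by
    rintro σ ⟨f, rfl⟩ τ
    exact ground_of_indep N J hJ _ (embed_indep N f) τ
  have hcard : (Set.range (embed N)).ncard = 2 ^ (N / 2) := by
    rw [Set.ncard_eq_toFinset_card', Set.toFinset_range, Finset.card_image_of_injective _ (embed_inj N)]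
    simp [Fintype.card_fun]
  calc (2 : ℕ) ^ (N / 2) = (Set.range (embed N)).ncard := hcard.symm
    _ ≤ S.ncard := Set.ncard_le_ncard hsub (Set.toFinite S)
end
end
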